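/- With X_k = Σ_{i=1}^k A_i, Y_k = Σ_{i=1}^k B_i, and T_K = Tr( Σ_{k=1}^K (A_k − B_k)[Y_k⁻¹ − X_k⁻¹] ), one has for all K ≥ 1: T_K ≥ (1/2) Σ_{i=1}^K Tr((A_i−B_i) Y_i⁻¹ (A_i−B_i) X_i⁻¹) + (1/2) Tr((X_K−Y_K) Y_K⁻¹ (X_K−Y_K) X_K⁻¹). -/

import Mathlib

open Matrix ComplexOrder

noncomputable def traceT (n : ℕ) (A B : ℕ → Matrix (Fin n) (Fin n) ℂ) (K : ℕ) : ℂ :=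
  Matrix.trace (∑ k ∈ Finset.Icc 1 K, (A k - B k) *
    ((∑ i ∈ Finset.Icc 1 k, B i)⁻¹ - (∑ i ∈ Finset.Icc 1 k, A i)⁻¹))

section helpers
variable {n : ℕ}

local notation "M" => Matrix (Fin n) (Fin n) ℂ

lemma psd_trace_nonneg {P : M} (hP : P.PosSemidef) : 0 ≤ P.trace := by
  obtain ⟨N, rfl⟩ : ∃ N : M, P = Nᴴ * N := by
    open scoped MatrixOrder in
    obtain ⟨X, hX, -, hXX⟩ :=
      CFC.exists_sqrt_of_isSelfAdjoint_of_quasispectrumRestricts hP.isHermitian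
        (QuasispectrumRestricts.nnreal_of_nonneg hP.nonneg)
    exact ⟨X, by rw [← hXX, ← star_eq_conjTranspose, hX.star_eq]⟩
  rw [Matrix.trace]
  apply Finset.sum_nonneg
  intro i _
  rw [Matrix.diag_apply, Matrix.mul_apply]
  apply Finset.sum_nonneg
  intro j _
  simpa [Matrix.conjTranspose_apply] using star_mul_self_nonneg (N j i)

lemma trace_mul_psd_nonneg {P Q : M} (hP : P.PosSemidef) (hQ : Q.PosSemidef) :
    0 ≤ (P * Q).trace := by
  obtain ⟨N, rfl⟩ : ∃ N : M, Q = Nᴴ * N := by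
    open scoped MatrixOrder in
    obtain ⟨X, hX, -, hXX⟩ :=
      CFC.exists_sqrt_of_isSelfAdjoint_of_quasispectrumRestricts hQ.isHermitian
        (QuasispectrumRestricts.nnreal_of_nonneg hQ.nonneg)
    exact ⟨X, by rw [← hXX, ← star_eq_conjTranspose, hX.star_eq]⟩
  rw [show P * (Nᴴ * N) = P * Nᴴ * N by rw [mul_assoc], Matrix.trace_mul_cycle]
  exact psd_trace_nonneg (hP.mul_mul_conjTranspose_same N)

lemma inv_sub_inv_psd {X C : M} (hX : X.PosDef) (hC : C.PosSemidef) :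
    (X⁻¹ - (X + C)⁻¹).PosSemidef := by
  set W := X + C with hW
  have hWpd : W.PosDef := hX.add_posSemidef hC
  have e1 : W⁻¹ * W = 1 := Matrix.nonsing_inv_mul _ ((Matrix.isUnit_iff_isUnit_det _).1 hWpd.isUnit)
  have e2 : W * W⁻¹ = 1 := Matrix.mul_nonsing_inv _ ((Matrix.isUnit_iff_isUnit_det _).1 hWpd.isUnit)
  have e3 : X⁻¹ * X = 1 := Matrix.nonsing_inv_mul _ ((Matrix.isUnit_iff_isUnit_det _).1 hX.isUnit)
  have e4 : X * X⁻¹ = 1 := Matrix.mul_nonsing_inv _ ((Matrix.isUnit_iff_isUnit_det _).1 hX.isUnit)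
  have hCW : C = W - X := by rw [hW]; abel
  have inner : C + C * X⁻¹ * C = W * X⁻¹ * W - W := by
    rw [hCW]
    have : (W - X) * X⁻¹ * (W - X) = W * X⁻¹ * W - W - W + X := by
      simp only [sub_mul, mul_sub, e3, e4, mul_one, one_mul]
      rw [mul_assoc W X⁻¹ X, e3, mul_one]
      abel
    rw [this]; abel
  have key : X⁻¹ - W⁻¹ = W⁻¹ * (C + C * X⁻¹ * C) * W⁻¹ := by
    rw [inner]
    simp only [mul_sub, sub_mul]
    rw [show W⁻¹ * (W * X⁻¹ * W) * W⁻¹ = (W⁻¹ * W) * X⁻¹ * (W * W⁻¹) by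
      simp only [mul_assoc], e1, e2, one_mul, mul_one, one_mul]
  rw [key]
  have hM : (C + C * X⁻¹ * C).PosSemidef := by
    refine hC.add ?_
    have := (hX.inv.posSemidef).conjTranspose_mul_mul_same (B := C)
    rwa [hC.isHermitian.eq] at this
  have := hM.conjTranspose_mul_mul_same (B := W⁻¹)
  rwa [(hWpd.isHermitian.inv).eq] at this

end helpers

section main
variable {n : ℕ}
local notation "M" => Matrix (Fin n) (Fin n) ℂ

lemma half_nonneg' : (0 : ℂ) ≤ 1 / 2 := by
  rw [Complex.le_def]; norm_num

lemma inv_sub_inv_eq {X Y : M} (hX : X.PosDef) (hY : Y.PosDef) :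
    Y⁻¹ - X⁻¹ = Y⁻¹ * (X - Y) * X⁻¹ := by
  have e3 : X * X⁻¹ = 1 := Matrix.mul_nonsing_inv _ ((Matrix.isUnit_iff_isUnit_det _).1 hX.isUnit)
  have e1 : Y⁻¹ * Y = 1 := Matrix.nonsing_inv_mul _ ((Matrix.isUnit_iff_isUnit_det _).1 hY.isUnit)
  simp only [mul_sub, sub_mul, e1, one_mul]
  rw [mul_assoc, e3, mul_one]

lemma trace_mono {E X Y C D : M} (hE : E.IsHermitian) (hX : X.PosDef) (hY : Y.PosDef)
    (hC : C.PosSemidef) (hD : D.PosSemidef) :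
    (E * (Y + D)⁻¹ * E * (X + C)⁻¹).trace ≤ (E * Y⁻¹ * E * X⁻¹).trace := by
  have hX' : (X + C).PosDef := hX.add_posSemidef hC
  have step1 : (E * (Y + D)⁻¹ * E * (X + C)⁻¹).trace ≤ (E * Y⁻¹ * E * (X + C)⁻¹).trace := by
    rw [← sub_nonneg, ← Matrix.trace_sub]
    have halg : E * Y⁻¹ * E * (X + C)⁻¹ - E * (Y + D)⁻¹ * E * (X + C)⁻¹
        = (E * (Y⁻¹ - (Y + D)⁻¹) * E) * (X + C)⁻¹ := by noncomm_ring
    rw [halg]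
    have hmid : (E * (Y⁻¹ - (Y + D)⁻¹) * E).PosSemidef := by
      have := (inv_sub_inv_psd hY hD).conjTranspose_mul_mul_same (B := E)
      rwa [hE.eq] at this
    exact trace_mul_psd_nonneg hmid hX'.inv.posSemidef
  have step2 : (E * Y⁻¹ * E * (X + C)⁻¹).trace ≤ (E * Y⁻¹ * E * X⁻¹).trace := by
    rw [← sub_nonneg, ← Matrix.trace_sub]
    have halg : E * Y⁻¹ * E * X⁻¹ - E * Y⁻¹ * E * (X + C)⁻¹
        = (E * Y⁻¹ * E) * (X⁻¹ - (X + C)⁻¹) := by noncomm_ring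
    rw [halg]
    have hmid : (E * Y⁻¹ * E).PosSemidef := by
      have := (hY.inv.posSemidef).conjTranspose_mul_mul_same (B := E)
      rwa [hE.eq] at this
    exact trace_mul_psd_nonneg hmid (inv_sub_inv_psd hX hC)
  exact step1.trans step2

lemma step_ineq {X Y Am Bm : M} (hX : X.PosDef) (hY : Y.PosDef)
    (hAm : Am.PosSemidef) (hBm : Bm.PosSemidef) :
    (1/2 : ℂ) * ((Am - Bm) * (Y + Bm)⁻¹ * (Am - Bm) * (X + Am)⁻¹).trace +
    (1/2 : ℂ) * (((X + Am) - (Y + Bm)) * (Y + Bm)⁻¹ * ((X + Am) - (Y + Bm)) * (X + Am)⁻¹).trace ≤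
    (1/2 : ℂ) * ((X - Y) * Y⁻¹ * (X - Y) * X⁻¹).trace +
    ((Am - Bm) * ((Y + Bm)⁻¹ - (X + Am)⁻¹)).trace := by
  have hX' : (X + Am).PosDef := hX.add_posSemidef hAm
  have hY' : (Y + Bm).PosDef := hY.add_posSemidef hBm
  set X' := X + Am with hX'def
  set Y' := Y + Bm with hY'def
  set D := Am - Bm with hDdef
  set E' := X' - Y' with hE'def
  have eX1 : X' * X'⁻¹ = 1 := Matrix.mul_nonsing_inv _ ((Matrix.isUnit_iff_isUnit_det _).1 hX'.isUnit)
  have eX2 : X'⁻¹ * X' = 1 := Matrix.nonsing_inv_mul _ ((Matrix.isUnit_iff_isUnit_det _).1 hX'.isUnit)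
  have eY1 : Y' * Y'⁻¹ = 1 := Matrix.mul_nonsing_inv _ ((Matrix.isUnit_iff_isUnit_det _).1 hY'.isUnit)
  have eY2 : Y'⁻¹ * Y' = 1 := Matrix.nonsing_inv_mul _ ((Matrix.isUnit_iff_isUnit_det _).1 hY'.isUnit)
  have h3 : (D * (Y'⁻¹ - X'⁻¹)).trace = (D * Y'⁻¹ * E' * X'⁻¹).trace := by
    rw [inv_sub_inv_eq hX' hY', ← hE'def]
    congr 1
    simp only [mul_assoc]
  have ht : (D * Y'⁻¹ * E' * X'⁻¹).trace = (D * Y'⁻¹).trace - (D * X'⁻¹).trace := by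
    rw [hE'def]
    have : D * Y'⁻¹ * (X' - Y') * X'⁻¹
        = D * Y'⁻¹ * (X' * X'⁻¹) - D * (Y'⁻¹ * Y') * X'⁻¹ := by noncomm_ring
    rw [this, eX1, eY2]
    simp only [mul_one, one_mul, Matrix.trace_sub]
  have hu : (E' * Y'⁻¹ * D * X'⁻¹).trace = (D * Y'⁻¹).trace - (D * X'⁻¹).trace := by
    rw [hE'def]
    have : (X' - Y') * Y'⁻¹ * D * X'⁻¹
        = X' * (Y'⁻¹ * D * X'⁻¹) - (Y' * Y'⁻¹) * (D * X'⁻¹) := by noncomm_ring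
    have h1 : (X' * (Y'⁻¹ * D * X'⁻¹)).trace = (D * Y'⁻¹).trace := by
      rw [Matrix.trace_mul_comm X' (Y'⁻¹ * D * X'⁻¹),
        show Y'⁻¹ * D * X'⁻¹ * X' = Y'⁻¹ * D * (X'⁻¹ * X') by simp only [mul_assoc],
        eX2, mul_one, Matrix.trace_mul_comm]
    rw [this, Matrix.trace_sub, h1, eY1, one_mul]
  have hsym : (E' * Y'⁻¹ * D * X'⁻¹).trace = (D * Y'⁻¹ * E' * X'⁻¹).trace := by rw [ht, hu]
  have hexp : ((X - Y) * Y'⁻¹ * (X - Y) * X'⁻¹).trace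
      = (E' * Y'⁻¹ * E' * X'⁻¹).trace - (E' * Y'⁻¹ * D * X'⁻¹).trace
        - (D * Y'⁻¹ * E' * X'⁻¹).trace + (D * Y'⁻¹ * D * X'⁻¹).trace := by
    have hXY : X - Y = E' - D := by rw [hE'def, hDdef, hX'def, hY'def]; abel
    rw [hXY, ← Matrix.trace_sub, ← Matrix.trace_sub, ← Matrix.trace_add]
    congr 1
    noncomm_ring
  have hmono : ((X - Y) * Y'⁻¹ * (X - Y) * X'⁻¹).trace ≤ ((X - Y) * Y⁻¹ * (X - Y) * X⁻¹).trace :=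
    trace_mono (hX.isHermitian.sub hY.isHermitian) hX hY hAm hBm
  rw [← sub_nonneg]
  have key : (1/2 : ℂ) * ((X - Y) * Y⁻¹ * (X - Y) * X⁻¹).trace + (D * (Y'⁻¹ - X'⁻¹)).trace
      - ((1/2 : ℂ) * (D * Y'⁻¹ * D * X'⁻¹).trace + (1/2 : ℂ) * (E' * Y'⁻¹ * E' * X'⁻¹).trace)
      = (1/2 : ℂ) * (((X - Y) * Y⁻¹ * (X - Y) * X⁻¹).trace
          - ((X - Y) * Y'⁻¹ * (X - Y) * X'⁻¹).trace) := by
    rw [h3]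
    linear_combination (1/2 : ℂ) * hexp - (1/2 : ℂ) * hsym
  rw [key]
  exact mul_nonneg half_nonneg' (sub_nonneg.2 hmono)

end main
section mainthm
variable {n : ℕ}
local notation "M" => Matrix (Fin n) (Fin n) ℂ

lemma sum_posDef {K : ℕ} (A : ℕ → M) (hA1 : (A 1).PosDef)
    (hA : ∀ k, 2 ≤ k → k ≤ K → (A k).PosSemidef) :
    ∀ k, 1 ≤ k → k ≤ K → (∑ i ∈ Finset.Icc 1 k, A i).PosDef := by
  intro k hk1
  induction k, hk1 using Nat.le_induction with
  | base => intro _; simpa using hA1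
  | succ k hk ih =>
    intro hkK
    rw [Finset.sum_Icc_succ_top (by omega)]
    exact (ih (by omega)).add_posSemidef (hA (k+1) (by omega) hkK)

end mainthm

theorem trace_lower_bound (n : ℕ) (K : ℕ) (hK : 1 ≤ K)
    (A B : ℕ → Matrix (Fin n) (Fin n) ℂ)
    (hA1 : (A 1).PosDef) (hB1 : (B 1).PosDef)
    (hA : ∀ k, 2 ≤ k → k ≤ K → (A k).PosSemidef)
    (hB : ∀ k, 2 ≤ k → k ≤ K → (B k).PosSemidef) :
    (1 / 2 : ℂ) * ∑ i ∈ Finset.Icc 1 K,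
        Matrix.trace ((A i - B i) * (∑ j ∈ Finset.Icc 1 i, B j)⁻¹ *
          (A i - B i) * (∑ j ∈ Finset.Icc 1 i, A j)⁻¹) +
      (1 / 2 : ℂ) *
        Matrix.trace (((∑ j ∈ Finset.Icc 1 K, A j) - (∑ j ∈ Finset.Icc 1 K, B j)) *
          (∑ j ∈ Finset.Icc 1 K, B j)⁻¹ *
          ((∑ j ∈ Finset.Icc 1 K, A j) - (∑ j ∈ Finset.Icc 1 K, B j)) *
          (∑ j ∈ Finset.Icc 1 K, A j)⁻¹) ≤
      traceT n A B K := by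
  revert hA hB
  induction K, hK using Nat.le_induction with
  | base =>
    intro hA hB
    simp only [traceT, Finset.Icc_self, Finset.sum_singleton]
    have hid : ((A 1 - B 1) * ((B 1)⁻¹ - (A 1)⁻¹)).trace
        = ((A 1 - B 1) * (B 1)⁻¹ * (A 1 - B 1) * (A 1)⁻¹).trace := by
      rw [inv_sub_inv_eq hA1 hB1]
      congr 1
      simp only [mul_assoc]
    rw [hid]
    exact le_of_eq (by ring)
  | succ K hK1 IH =>
    intro hA hB
    have hAK : ∀ k, 2 ≤ k → k ≤ K → (A k).PosSemidef := fun k h2 hk => hA k h2 (by omega)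
    have hBK : ∀ k, 2 ≤ k → k ≤ K → (B k).PosSemidef := fun k h2 hk => hB k h2 (by omega)
    have IH' := IH hAK hBK
    have hpdA : (∑ j ∈ Finset.Icc 1 K, A j).PosDef :=
      sum_posDef A hA1 hA K (by omega) (by omega)
    have hpdB : (∑ j ∈ Finset.Icc 1 K, B j).PosDef :=
      sum_posDef B hB1 hB K (by omega) (by omega)
    have hsplitA : ∑ j ∈ Finset.Icc 1 (K+1), A j
        = (∑ j ∈ Finset.Icc 1 K, A j) + A (K+1) := Finset.sum_Icc_succ_top (by omega) _
    have hsplitB : ∑ j ∈ Finset.Icc 1 (K+1), B j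
        = (∑ j ∈ Finset.Icc 1 K, B j) + B (K+1) := Finset.sum_Icc_succ_top (by omega) _
    have htT : traceT n A B (K+1) = traceT n A B K +
        ((A (K+1) - B (K+1)) * (((∑ j ∈ Finset.Icc 1 K, B j) + B (K+1))⁻¹ -
          ((∑ j ∈ Finset.Icc 1 K, A j) + A (K+1))⁻¹)).trace := by
      rw [traceT, traceT, Finset.sum_Icc_succ_top (by omega), Matrix.trace_add,
        hsplitA, hsplitB]
    rw [Finset.sum_Icc_succ_top (show 1 ≤ K + 1 by omega), hsplitA, hsplitB, htT]
    have hstep := step_ineq hpdA hpdB (hA (K+1) (by omega) (by omega))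
      (hB (K+1) (by omega) (by omega))
    calc (1 / 2 : ℂ) * ((∑ i ∈ Finset.Icc 1 K,
            Matrix.trace ((A i - B i) * (∑ j ∈ Finset.Icc 1 i, B j)⁻¹ *
              (A i - B i) * (∑ j ∈ Finset.Icc 1 i, A j)⁻¹)) +
            Matrix.trace ((A (K+1) - B (K+1)) * ((∑ j ∈ Finset.Icc 1 K, B j) + B (K+1))⁻¹ *
              (A (K+1) - B (K+1)) * ((∑ j ∈ Finset.Icc 1 K, A j) + A (K+1))⁻¹)) +
          (1 / 2 : ℂ) *
            Matrix.trace ((((∑ j ∈ Finset.Icc 1 K, A j) + A (K+1)) -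
                ((∑ j ∈ Finset.Icc 1 K, B j) + B (K+1))) *
              ((∑ j ∈ Finset.Icc 1 K, B j) + B (K+1))⁻¹ *
              (((∑ j ∈ Finset.Icc 1 K, A j) + A (K+1)) -
                ((∑ j ∈ Finset.Icc 1 K, B j) + B (K+1))) *
              ((∑ j ∈ Finset.Icc 1 K, A j) + A (K+1))⁻¹)
        = (1 / 2 : ℂ) * (∑ i ∈ Finset.Icc 1 K,
            Matrix.trace ((A i - B i) * (∑ j ∈ Finset.Icc 1 i, B j)⁻¹ *
              (A i - B i) * (∑ j ∈ Finset.Icc 1 i, A j)⁻¹)) +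
          ((1 / 2 : ℂ) *
            Matrix.trace ((A (K+1) - B (K+1)) * ((∑ j ∈ Finset.Icc 1 K, B j) + B (K+1))⁻¹ *
              (A (K+1) - B (K+1)) * ((∑ j ∈ Finset.Icc 1 K, A j) + A (K+1))⁻¹) +
          (1 / 2 : ℂ) *
            Matrix.trace ((((∑ j ∈ Finset.Icc 1 K, A j) + A (K+1)) -
                ((∑ j ∈ Finset.Icc 1 K, B j) + B (K+1))) *
              ((∑ j ∈ Finset.Icc 1 K, B j) + B (K+1))⁻¹ *
              (((∑ j ∈ Finset.Icc 1 K, A j) + A (K+1)) -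
                ((∑ j ∈ Finset.Icc 1 K, B j) + B (K+1))) *
              ((∑ j ∈ Finset.Icc 1 K, A j) + A (K+1))⁻¹)) := by ring
      _ ≤ (1 / 2 : ℂ) * (∑ i ∈ Finset.Icc 1 K,
            Matrix.trace ((A i - B i) * (∑ j ∈ Finset.Icc 1 i, B j)⁻¹ *
              (A i - B i) * (∑ j ∈ Finset.Icc 1 i, A j)⁻¹)) +
          ((1 / 2 : ℂ) *
            Matrix.trace (((∑ j ∈ Finset.Icc 1 K, A j) - (∑ j ∈ Finset.Icc 1 K, B j)) *
              (∑ j ∈ Finset.Icc 1 K, B j)⁻¹ *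
              ((∑ j ∈ Finset.Icc 1 K, A j) - (∑ j ∈ Finset.Icc 1 K, B j)) *
              (∑ j ∈ Finset.Icc 1 K, A j)⁻¹) +
            ((A (K+1) - B (K+1)) * (((∑ j ∈ Finset.Icc 1 K, B j) + B (K+1))⁻¹ -
              ((∑ j ∈ Finset.Icc 1 K, A j) + A (K+1))⁻¹)).trace) :=
          add_le_add_right hstep _
      _ ≤ traceT n A B K +
          ((A (K+1) - B (K+1)) * (((∑ j ∈ Finset.Icc 1 K, B j) + B (K+1))⁻¹ -
            ((∑ j ∈ Finset.Icc 1 K, A j) + A (K+1))⁻¹)).trace := by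
          rw [← add_assoc]
          exact add_le_add_left IH' _
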